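/- Let G be a profinite group and g an element of G whose conjugacy class g^G has cardinality strictly less than 2^{\aleph_0}. Then the conjugacy class g^G is finite. -/

import Mathlib

open Cardinal Filter Set

open Cardinal Filter Set

/-- In a compact, totally separated (T2) space, a nonempty compact set all of whose
points are accumulation points of the set has cardinality at least the continuum. -/
theorem aux_continuum_le {X : Type*} [TopologicalSpace X] [CompactSpace X] [T2Space X]
    [TotallySeparatedSpace X] {S : Set X} (hScomp : IsCompact S) (hne : S.Nonempty)
    (hacc : ∀ x ∈ S, AccPt x (Filter.principal S)) : Cardinal.continuum ≤ #S := by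
  classical
  set P : Set X → Prop := fun V => (∃ U, IsClopen U ∧ V = S ∩ U) ∧ V.Nonempty with hP
  have hPS : P S := ⟨⟨univ, isClopen_univ, by simp⟩, hne⟩
  have hPsubS : ∀ V, P V → V ⊆ S := by rintro V ⟨⟨U, hU, rfl⟩, -⟩; exact inter_subset_left
  have hPclosed : ∀ V, P V → IsClosed V := by
    rintro V ⟨⟨U, hU, rfl⟩, -⟩; exact hScomp.isClosed.inter hU.isClosed
  have key : ∀ V : Set X, P V → ∃ p : Set X × Set X,
      P p.1 ∧ P p.2 ∧ p.1 ⊆ V ∧ p.2 ⊆ V ∧ Disjoint p.1 p.2 := by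
    rintro V ⟨⟨U, hU, rfl⟩, x, hxS, hxU⟩
    have hx := hacc x hxS
    rw [accPt_iff_nhds] at hx
    obtain ⟨y, ⟨hyU, hyS⟩, hyx⟩ := hx U (hU.isOpen.mem_nhds hxU)
    obtain ⟨W, hW, hxW, hyW⟩ := exists_isClopen_of_totally_separated hyx.symm
    refine ⟨(S ∩ (U ∩ W), S ∩ (U ∩ Wᶜ)), ⟨⟨U ∩ W, hU.inter hW, rfl⟩, x, hxS, hxU, hxW⟩,
      ⟨⟨U ∩ Wᶜ, hU.inter hW.compl, rfl⟩, y, hyS, hyU, hyW⟩, ?_, ?_, ?_⟩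
    · exact fun z hz => ⟨hz.1, hz.2.1⟩
    · exact fun z hz => ⟨hz.1, hz.2.1⟩
    · rw [Set.disjoint_left]
      rintro z ⟨-, -, hzW⟩ ⟨-, -, hzW'⟩
      exact hzW' hzW
  choose f hf1 hf2 hf3 hf4 hf5 using key
  let D : List Bool → { V : Set X // P V } := fun l =>
    l.rec ⟨S, hPS⟩ (fun b _ ih =>
      ⟨bif b then (f ih.1 ih.2).2 else (f ih.1 ih.2).1, by
        cases b
        · exact hf1 ih.1 ih.2
        · exact hf2 ih.1 ih.2⟩)
  have hDcons : ∀ (b : Bool) (l : List Bool), (D (b :: l)).1 ⊆ (D l).1 := by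
    intro b l
    cases b
    · exact hf3 (D l).1 (D l).2
    · exact hf4 (D l).1 (D l).2
  have hDdisj : ∀ l : List Bool, Disjoint (D (false :: l)).1 (D (true :: l)).1 :=
    fun l => hf5 (D l).1 (D l).2
  -- prefix lists
  let L : (ℕ → Bool) → ℕ → List Bool := fun σ n => ((List.range n).map σ).reverse
  have hL0 : ∀ σ, L σ 0 = [] := fun σ => by simp [L]
  have hLsucc : ∀ σ n, L σ (n + 1) = σ n :: L σ n := by
    intro σ n; simp [L, List.range_succ]
  have hFex : ∀ σ : ℕ → Bool, (⋂ n, (D (L σ n)).1).Nonempty := by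
    intro σ
    apply IsCompact.nonempty_iInter_of_sequence_nonempty_isCompact_isClosed
    · intro i; rw [hLsucc]; exact hDcons _ _
    · intro i; exact (D (L σ i)).2.2
    · exact hScomp.of_isClosed_subset (hPclosed _ (D (L σ 0)).2) (hPsubS _ (D (L σ 0)).2)
    · intro i; exact hPclosed _ (D (L σ i)).2
  choose F hF using hFex
  have hFmem : ∀ σ n, F σ ∈ (D (L σ n)).1 := by
    intro σ n; exact Set.mem_iInter.mp (hF σ) n
  have hFS : ∀ σ, F σ ∈ S := fun σ => by
    have := hFmem σ 0; rw [hL0] at this; exact this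
  have hinj : Function.Injective fun σ : ℕ → Bool => (⟨F σ, hFS σ⟩ : S) := by
    intro σ τ hστ
    simp only [Subtype.mk.injEq] at hστ
    by_contra hne'
    obtain ⟨k, hk⟩ := Function.ne_iff.mp hne'
    have hex : ∃ k, σ k ≠ τ k := ⟨k, hk⟩
    set n := Nat.find hex with hn
    have hnne : σ n ≠ τ n := Nat.find_spec hex
    have hlt : ∀ m < n, σ m = τ m := fun m hm => not_not.mp (Nat.find_min hex hm)
    have hLeq : L σ n = L τ n := by
      simp only [L]
      congr 1
      exact List.map_congr_left (fun a ha => hlt a (List.mem_range.mp ha))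
    have h1 := hFmem σ (n + 1)
    have h2 := hFmem τ (n + 1)
    rw [hLsucc] at h1 h2
    rw [hLeq] at h1
    rw [hστ] at h1
    cases hσn : σ n <;> cases hτn : τ n
    · exact hnne (hσn.trans hτn.symm)
    · rw [hσn] at h1; rw [hτn] at h2
      exact Set.disjoint_left.mp (hDdisj (L τ n)) h1 h2
    · rw [hσn] at h1; rw [hτn] at h2
      exact Set.disjoint_left.mp (hDdisj (L τ n)) h2 h1
    · exact hnne (hσn.trans hτn.symm)
  have hle := Cardinal.lift_mk_le'.mpr ⟨⟨_, hinj⟩⟩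
  have hmk : #(ℕ → Bool) = Cardinal.continuum := by
    rw [← Cardinal.power_def, Cardinal.mk_bool, Cardinal.mk_nat, Cardinal.two_power_aleph0]
  rw [hmk] at hle
  simpa using hle

/-- In a profinite group, an element whose conjugacy class has fewer than
`2^ℵ₀` elements has a finite conjugacy class. -/
theorem stmt1 {G : Type*} [Group G] [TopologicalSpace G] [IsTopologicalGroup G]
    [CompactSpace G] [T2Space G] [TotallyDisconnectedSpace G] (g : G)
    (h : #(Set.range fun x : G => x⁻¹ * g * x) < Cardinal.continuum) :
    (Set.range fun x : G => x⁻¹ * g * x).Finite := by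
  classical
  by_contra hfin
  have hS : (Set.range fun x : G => x⁻¹ * g * x).Infinite := hfin
  set S := Set.range fun x : G => x⁻¹ * g * x with hSdef
  have hcont : Continuous fun x : G => x⁻¹ * g * x := by continuity
  have hScomp : IsCompact S := isCompact_range hcont
  haveI : TotallySeparatedSpace G := loc_compact_t2_tot_disc_iff_tot_sep.mp inferInstance
  -- an accumulation point
  obtain ⟨x₀, hx₀⟩ := hS.exists_accPt_principal
  have hx₀S : x₀ ∈ S := by
    have : ClusterPt x₀ (Filter.principal S) := hx₀.clusterPt
    rw [← mem_closure_iff_clusterPt] at this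
    rwa [hScomp.isClosed.closure_eq] at this
  obtain ⟨b, hb⟩ := hx₀S
  have hacc : ∀ s ∈ S, AccPt s (Filter.principal S) := by
    rintro s ⟨a, ha⟩
    set c := b⁻¹ * a with hc
    have hφ : (fun z : G => c⁻¹ * z * c) x₀ = s := by
      rw [← hb, ← ha, hc]; group
    rw [accPt_iff_nhds]
    intro U hU
    rw [accPt_iff_nhds] at hx₀
    have hpre : (fun z : G => c⁻¹ * z * c) ⁻¹' U ∈ nhds x₀ := by
      apply ContinuousAt.preimage_mem_nhds
      · exact (by continuity : Continuous fun z : G => c⁻¹ * z * c).continuousAt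
      · show U ∈ nhds (c⁻¹ * x₀ * c)
        rwa [show c⁻¹ * x₀ * c = s from hφ]
    obtain ⟨y, ⟨hyU, hyS⟩, hyx⟩ := hx₀ _ hpre
    refine ⟨c⁻¹ * y * c, ⟨hyU, ?_⟩, ?_⟩
    · obtain ⟨w, hw⟩ := hyS
      exact ⟨w * c, by rw [← hw]; group⟩
    · intro hcon
      apply hyx
      have hcon' : c⁻¹ * y * c = c⁻¹ * x₀ * c := by rw [hcon, ← hφ]
      have : y = x₀ := by
        have := hcon'
        simp only [mul_left_inj, mul_right_inj] at this
        exact this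
      exact this
  have hne : S.Nonempty := ⟨g, 1, by group⟩
  have := aux_continuum_le hScomp hne hacc
  exact absurd this (not_le.mpr h)
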